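/- Let m₁ ≥ m₂ be integers, k a natural number, and n ≥ max(k, m₁) a natural number. If 2k − n ≤ m₁ + m₂ < k, then the algebra A = IDD(K^k_n, m₁, m₂) is nilpotent, i.e., there exists N ≥ 1 with A^{⋄N} = 0. -/

import Mathlib

/-- The structure constant `c_m(i)`: the falling factorial `i(i-1)⋯(i-m+1)` when `m ≥ 0`,
and `1/((i+1)(i+2)⋯(i-m))` when `m < 0`. -/
noncomputable def cc (m : ℤ) (i : ℕ) : ℂ :=
  if 0 ≤ m then ∏ t ∈ Finset.range m.toNat, ((i : ℂ) - (t : ℂ))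
  else (∏ t ∈ Finset.range (-m).toNat, ((i : ℂ) + (t : ℂ) + 1))⁻¹

/-- The index set `{i : ℕ | k ≤ i ≤ N}` (with `N ∈ ℕ ∪ {∞}`). -/
abbrev Idx (k : ℕ) (N : ℕ∞) := {i : ℕ // k ≤ i ∧ (i : ℕ∞) ≤ N}

/-- The underlying vector space of `IDD(K^k_N, m₁, m₂)`: the complex vector space with
basis `{e_i : k ≤ i ≤ N}`. -/
abbrev IDD (k : ℕ) (N : ℕ∞) := Idx k N →₀ ℂ

/- The multiplication of `IDD(K^k_N, m₁, m₂)`: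
`e_i ⋄ e_j = c_{m₁}(i) c_{m₂}(j) e_{i+j-m₁-m₂}` when `k ≤ i+j-m₁-m₂ ≤ N`, and `0` otherwise,
extended bilinearly. -/
open Classical in
noncomputable def dmul (k : ℕ) (N : ℕ∞) (m₁ m₂ : ℤ) (x y : IDD k N) : IDD k N :=
  x.sum fun i xi => y.sum fun j yj =>
    if h : ∃ p : Idx k N, (p.1 : ℤ) = (i.1 : ℤ) + (j.1 : ℤ) - (m₁ + m₂) then
      Finsupp.single h.choose (xi * yj * cc m₁ i.1 * cc m₂ j.1)
    else 0

/- The powers `A^{⋄t}`: `A^{⋄1} = A`, `A^{⋄t} = Σ_{i+j=t, i,j≥1} span(A^{⋄i} ⋄ A^{⋄j})`. -/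
noncomputable def dpow (k : ℕ) (N : ℕ∞) (m₁ m₂ : ℤ) : ℕ → Submodule ℂ (IDD k N)
  | 0 => ⊥
  | 1 => ⊤
  | t + 2 =>
      ⨆ i ∈ Finset.Icc 1 (t + 1), Submodule.span ℂ
        {z | ∃ x ∈ dpow k N m₁ m₂ i, ∃ y ∈ dpow k N m₁ m₂ (t + 2 - i),
          z = dmul k N m₁ m₂ x y}
  decreasing_by
  · simp only [Finset.mem_Icc] at *; omega
  · simp only [Finset.mem_Icc] at *; omega

/-- Filtration: elements supported on indices ≥ a. -/
noncomputable def Flt (k : ℕ) (N : ℕ∞) (a : ℤ) : Submodule ℂ (IDD k N) :=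
  Finsupp.supported ℂ ℂ {p : Idx k N | a ≤ (p.1 : ℤ)}

lemma Flt_mono (k : ℕ) (N : ℕ∞) {a b : ℤ} (h : a ≤ b) : Flt k N b ≤ Flt k N a :=
  Finsupp.supported_mono (fun p hp => le_trans h hp)

lemma dmul_mem_Flt (k : ℕ) (N : ℕ∞) (m₁ m₂ : ℤ) {a b : ℤ} {x y : IDD k N}
    (hx : x ∈ Flt k N a) (hy : y ∈ Flt k N b) :
    dmul k N m₁ m₂ x y ∈ Flt k N (a + b - (m₁ + m₂)) := by
  rw [dmul, Finsupp.sum]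
  refine Submodule.sum_mem _ (fun i hi => ?_)
  rw [Finsupp.sum]
  refine Submodule.sum_mem _ (fun j hj => ?_)
  split
  · rename_i h
    have hp := h.choose_spec
    have hia : a ≤ (i.1 : ℤ) := hx hi
    have hjb : b ≤ (j.1 : ℤ) := hy hj
    exact Finsupp.single_mem_supported ℂ _ (by simp only [Set.mem_setOf_eq]; omega)
  · exact Submodule.zero_mem _

lemma dpow_le_Flt (k : ℕ) (N : ℕ∞) (m₁ m₂ : ℤ) (hlev : m₁ + m₂ < (k : ℤ)) :
    ∀ t, 1 ≤ t → dpow k N m₁ m₂ t ≤ Flt k N ((k : ℤ) + ((t : ℤ) - 1) * ((k : ℤ) - (m₁ + m₂))) := by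
  intro t
  induction t using Nat.strong_induction_on with
  | _ t IH =>
    match t with
    | 0 => intro h; exact absurd h (by omega)
    | 1 =>
      intro _
      rw [dpow]
      intro x _
      intro p hp
      have := p.2.1
      simp only [Set.mem_setOf_eq]
      push_cast
      omega
    | t + 2 =>
      intro _
      rw [dpow]
      refine iSup₂_le (fun i hi => ?_)
      rw [Finset.mem_Icc] at hi
      refine Submodule.span_le.2 (fun z hz => ?_)
      obtain ⟨x, hx, y, hy, rfl⟩ := hz
      have h1 : dpow k N m₁ m₂ i ≤ Flt k N ((k : ℤ) + ((i : ℤ) - 1) * ((k : ℤ) - (m₁ + m₂))) :=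
        IH i (by omega) hi.1
      have h2 : dpow k N m₁ m₂ (t + 2 - i) ≤
          Flt k N ((k : ℤ) + ((((t:ℕ) + 2 - i : ℕ) : ℤ) - 1) * ((k : ℤ) - (m₁ + m₂))) :=
        IH (t + 2 - i) (by omega) (by omega)
      have key := dmul_mem_Flt k N m₁ m₂ (h1 hx) (h2 hy)
      refine Flt_mono k N ?_ key
      have : (((t : ℕ) + 2 - i : ℕ) : ℤ) = (t : ℤ) + 2 - (i : ℤ) := by
        push_cast [Nat.cast_sub (by omega : i ≤ t + 2)]; ring
      rw [this]
      push_cast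
      ring_nf
      omega

theorem stmt5 (k n : ℕ) (m₁ m₂ : ℤ) (hm : m₂ ≤ m₁) (hkn : k ≤ n) (hm1 : m₁ ≤ (n : ℤ))
    (hlev1 : 2 * (k : ℤ) - (n : ℤ) ≤ m₁ + m₂) (hlev2 : m₁ + m₂ < (k : ℤ)) :
    ∃ N, 1 ≤ N ∧ dpow k (n : ℕ∞) m₁ m₂ N = ⊥ := by
  refine ⟨n + 2, by omega, ?_⟩
  have h := dpow_le_Flt k (n : ℕ∞) m₁ m₂ hlev2 (n + 2) (by omega)
  refine le_bot_iff.1 (h.trans ?_)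
  intro x hx
  have hsupp : x.support = ∅ := by
    by_contra hne
    obtain ⟨p, hp⟩ := Finset.nonempty_iff_ne_empty.2 hne
    have h1 := hx hp
    simp only [Set.mem_setOf_eq] at h1
    have h2 : (p.1 : ℕ∞) ≤ (n : ℕ∞) := p.2.2
    have h3 : p.1 ≤ n := by exact_mod_cast h2
    have hd : (1 : ℤ) ≤ (k : ℤ) - (m₁ + m₂) := by omega
    have : (k : ℤ) + ((↑(n + 2) : ℤ) - 1) * 1 ≤ (k : ℤ) + ((↑(n + 2) : ℤ) - 1) * ((k : ℤ) - (m₁ + m₂)) := by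
      apply (add_le_add_iff_left _).2
      apply mul_le_mul_of_nonneg_left hd (by push_cast; omega)
    push_cast at this h1 ⊢
    omega
  simp only [Submodule.mem_bot]
  exact Finsupp.support_eq_empty.1 hsupp
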